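/- Let $\bar{n} \in N_T^d$ and let $1 \le k \le d-1$. Define $\bar{n}^{(k)} = (n_1+1, \dots, n_{d-k}+1, n_{d-k+1}, \dots, n_d) \in N_T^d$ (the normalized form of the degree-$k$ neighbor of $\bar{n}$ in $T$ obtained by decrementing the last $k$ coordinates). Then every $\gamma \in S_{\bar{n}}$ satisfies $\gamma\, l_{\bar{n}^{(k)}} = l_{\bar{n}^{(k)}}$ (i.e. $S_{\bar{n}} \subseteq S_{\bar{n}^{(k)}}$, so that $[l_{\bar{n}^{(k)}}]$ is a friend of $[l_{\bar{n}}]$) if and only if $n_{d-k} > n_{d-k+1}$, i.e. $k$ is a partial sum $d_r + d_{r-1} + \dots$ of block sizes of $\bar{n}$ counted from the end. -/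

import Mathlib

open Matrix Polynomial

noncomputable section

/-- `t = X⁻¹` in the Laurent series field `F = 𝔽_q((X))`. -/
def tF (Fq : Type) [Field Fq] : LaurentSeries Fq := HahnSeries.single (-1 : ℤ) (1 : Fq)

/-- The embedding of the polynomial ring `𝔽_q[t]` into `F = 𝔽_q((X))`, sending the
polynomial variable to `t = X⁻¹`. -/
def polyToF (Fq : Type) [Field Fq] : Polynomial Fq →+* LaurentSeries Fq :=
  Polynomial.eval₂RingHom (HahnSeries.C) (tF Fq)

/-- The lattice `l_n̄ = t^{n₁}𝒪e₁ ⊕ ⋯ ⊕ t^{n_d}𝒪e_d` as an `𝒪`-submodule of `F^d`,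
where `𝒪 = 𝔽_q[[X]]` acts on `F = 𝔽_q((X))` via the inclusion, and
`t^{n} = HahnSeries.single (-n) 1`. -/
def lattM (Fq : Type) [Field Fq] {d : ℕ} (n : Fin d → ℤ) :
    Submodule (PowerSeries Fq) (Fin d → LaurentSeries Fq) :=
  Submodule.span (PowerSeries Fq)
    (Set.range fun i : Fin d =>
      (HahnSeries.single (-(n i)) (1 : Fq) : LaurentSeries Fq) •
        (Pi.single i (1 : LaurentSeries Fq) : Fin d → LaurentSeries Fq))

/-- The image `g L` of an `𝒪`-submodule `L ⊆ F^d` under a matrix `g ∈ M_d(F)`. -/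
def actM (Fq : Type) [Field Fq] {d : ℕ} (g : Matrix (Fin d) (Fin d) (LaurentSeries Fq))
    (L : Submodule (PowerSeries Fq) (Fin d → LaurentSeries Fq)) :
    Submodule (PowerSeries Fq) (Fin d → LaurentSeries Fq) :=
  L.map ((g.mulVecLin).restrictScalars (PowerSeries Fq))

/-- The image `a L` of an `𝒪`-submodule `L ⊆ F^d` under scalar multiplication by `a ∈ F`. -/
def scaleM (Fq : Type) [Field Fq] {d : ℕ} (a : LaurentSeries Fq)
    (L : Submodule (PowerSeries Fq) (Fin d → LaurentSeries Fq)) :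
    Submodule (PowerSeries Fq) (Fin d → LaurentSeries Fq) :=
  L.map ((LinearMap.lsmul (LaurentSeries Fq) (Fin d → LaurentSeries Fq) a).restrictScalars
    (PowerSeries Fq))

/-- The image in `M_d(F)` of a matrix over `𝔽_q[t]`. -/
def glToF (Fq : Type) [Field Fq] {d : ℕ} (γ : GL (Fin d) (Polynomial Fq)) :
    Matrix (Fin d) (Fin d) (LaurentSeries Fq) :=
  (γ : Matrix (Fin d) (Fin d) (Polynomial Fq)).map (polyToF Fq)

/-- The stabilizer `S_n̄ = {γ ∈ GL_d(𝔽_q[t]) : γ l_n̄ = l_n̄}`. -/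
def Stab (Fq : Type) [Field Fq] {d : ℕ} (n : Fin d → ℤ) :
    Set (GL (Fin d) (Polynomial Fq)) :=
  {γ | actM Fq (glToF Fq γ) (lattM Fq n) = lattM Fq n}

/-- `N_T^d`: integer tuples `n₁ ≥ n₂ ≥ ⋯ ≥ n_d = 0`. -/
def NT {d : ℕ} (n : Fin d → ℤ) : Prop :=
  (∀ i j : Fin d, i ≤ j → n j ≤ n i) ∧ ∀ i : Fin d, (i : ℕ) = d - 1 → n i = 0

/-- The difference sequence `m_i = n_i - n_{i+1}`. -/
def mdiff {d : ℕ} (n : Fin d → ℤ) (i : ℕ) (h : i + 1 < d) : ℤ :=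
  n ⟨i, Nat.lt_of_succ_lt h⟩ - n ⟨i + 1, h⟩

end

noncomputable section AuxProofs

open HahnSeries Matrix Polynomial

variable {Fq : Type} [Field Fq] {d : ℕ}

private lemma smul_laurent (c : PowerSeries Fq) (a : LaurentSeries Fq) :
    c • a = (ofPowerSeries ℤ Fq c) * a := by
  rw [Algebra.smul_def]; rfl

private lemma coeff_ofPS_neg (c : PowerSeries Fq) {m : ℤ} (hm : m < 0) :
    (ofPowerSeries ℤ Fq c).coeff m = 0 := by
  rw [show ((ofPowerSeries ℤ Fq c) : LaurentSeries Fq) = ((c : PowerSeries Fq) : LaurentSeries Fq)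
    from rfl, PowerSeries.coeff_coe, if_pos hm]

private lemma mem_span_single_iff (r : ℤ) (a : LaurentSeries Fq) :
    a ∈ Submodule.span (PowerSeries Fq) {(single r (1 : Fq) : LaurentSeries Fq)} ↔
      ∀ m : ℤ, m < r → a.coeff m = 0 := by
  rw [Submodule.mem_span_singleton]
  constructor
  · rintro ⟨c, rfl⟩ m hm
    rw [smul_laurent]
    have key := coeff_mul_single_add (x := ofPowerSeries ℤ Fq c) (r := (1 : Fq))
      (a := m - r) (b := r)
    rw [sub_add_cancel] at key
    rw [key, coeff_ofPS_neg (m := m - r) c (by omega), zero_mul]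
  · intro h
    refine ⟨PowerSeries.mk fun k => a.coeff (r + k), ?_⟩
    ext m
    have key := coeff_mul_single_add
      (x := ofPowerSeries ℤ Fq (PowerSeries.mk fun k => a.coeff (r + k))) (r := (1 : Fq))
      (a := m - r) (b := r)
    rw [sub_add_cancel] at key
    rw [smul_laurent, key, mul_one]
    by_cases hm : m - r < 0
    · rw [coeff_ofPS_neg _ hm, h m (by omega)]
    · rw [show ((ofPowerSeries ℤ Fq (PowerSeries.mk fun k => a.coeff (r + k))) :
          LaurentSeries Fq) = (((PowerSeries.mk fun k => a.coeff (r + k)) : PowerSeries Fq) :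
          LaurentSeries Fq) from rfl, PowerSeries.coeff_coe, if_neg hm,
        PowerSeries.coeff_mk]
      congr 1
      omega

private lemma gen_eq (n : Fin d → ℤ) (i : Fin d) :
    (single (-(n i)) (1 : Fq) : LaurentSeries Fq) •
        (Pi.single i (1 : LaurentSeries Fq) : Fin d → LaurentSeries Fq) =
      (Pi.single i (single (-(n i)) (1 : Fq) : LaurentSeries Fq) :
        Fin d → LaurentSeries Fq) := by
  funext j
  by_cases h : j = i
  · subst h; simp
  · simp [Pi.single_eq_of_ne h]

private lemma lattM_eq_pi (n : Fin d → ℤ) :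
    lattM Fq n = Submodule.pi Set.univ
      (fun i => Submodule.span (PowerSeries Fq)
        {(single (-(n i)) (1 : Fq) : LaurentSeries Fq)}) := by
  apply le_antisymm
  · rw [lattM, Submodule.span_le]
    rintro _ ⟨i, rfl⟩
    rw [SetLike.mem_coe, Submodule.mem_pi]
    intro j _
    have hg := congrFun (gen_eq (Fq := Fq) n i) j
    dsimp only at hg ⊢
    rw [hg]
    by_cases h : j = i
    · subst h; rw [Pi.single_eq_same]; exact Submodule.subset_span rfl
    · rw [Pi.single_eq_of_ne h]; exact Submodule.zero_mem _
  · intro v hv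
    rw [Submodule.mem_pi] at hv
    rw [← Finset.univ_sum_single v]
    apply Submodule.sum_mem
    intro i _
    obtain ⟨c, hc⟩ := Submodule.mem_span_singleton.1 (hv i (Set.mem_univ i))
    have hsingle : (Pi.single i (c • ((single (-(n i)) (1 : Fq)) : LaurentSeries Fq)) :
        Fin d → LaurentSeries Fq) =
        c • (Pi.single i ((single (-(n i)) (1 : Fq)) : LaurentSeries Fq) :
          Fin d → LaurentSeries Fq) := by
      funext j
      by_cases h : j = i
      · subst h; simp
      · rw [Pi.single_eq_of_ne h, Pi.smul_apply, Pi.single_eq_of_ne h]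
        exact (smul_zero (M := LaurentSeries Fq) c).symm
    rw [← hc, hsingle]
    exact Submodule.smul_mem _ _ (Submodule.subset_span ⟨i, gen_eq n i⟩)

private lemma mem_lattM_iff (n : Fin d → ℤ) (v : Fin d → LaurentSeries Fq) :
    v ∈ lattM Fq n ↔ ∀ i, ∀ m : ℤ, m < -(n i) → (v i).coeff m = 0 := by
  rw [lattM_eq_pi, Submodule.mem_pi]
  exact ⟨fun h i => (mem_span_single_iff _ _).1 (h i (Set.mem_univ i)),
    fun h i _ => (mem_span_single_iff _ _).2 (h i)⟩

private lemma mulVec_gen (g : Matrix (Fin d) (Fin d) (LaurentSeries Fq)) (n : Fin d → ℤ)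
    (j : Fin d) :
    (g.mulVecLin.restrictScalars (PowerSeries Fq))
      ((single (-(n j)) (1 : Fq) : LaurentSeries Fq) •
        (Pi.single j (1 : LaurentSeries Fq) : Fin d → LaurentSeries Fq)) =
      fun i => g i j * single (-(n j)) 1 := by
  rw [gen_eq]
  show g.mulVec (Pi.single j (single (-(n j)) 1)) = _
  rw [Matrix.mulVec_single]
  rfl

private lemma coeff_mul_single (x : LaurentSeries Fq) (b m : ℤ) :
    (x * single b (1 : Fq)).coeff (m + b) = x.coeff m := by
  rw [coeff_mul_single_add, mul_one]

private lemma actM_le_iff (g : Matrix (Fin d) (Fin d) (LaurentSeries Fq)) (n n' : Fin d → ℤ) :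
    actM Fq g (lattM Fq n) ≤ lattM Fq n' ↔
      ∀ i j : Fin d, ∀ m : ℤ, m < n j - n' i → (g i j).coeff m = 0 := by
  constructor
  · intro h i j m hm
    have hg : (fun i => g i j * single (-(n j)) (1 : Fq)) ∈ lattM Fq n' := by
      rw [← mulVec_gen g n j]
      exact h (Submodule.mem_map_of_mem (Submodule.subset_span ⟨j, rfl⟩))
    have h2 := (mem_lattM_iff _ _).1 hg i (m + (-(n j))) (by omega)
    rwa [_root_.coeff_mul_single] at h2
  · intro h
    rw [actM, lattM, Submodule.map_span, Submodule.span_le]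
    rintro _ ⟨_, ⟨j, rfl⟩, rfl⟩
    rw [SetLike.mem_coe, mulVec_gen, mem_lattM_iff]
    intro i m hm
    have hme : m = (m + n j) + (-(n j)) := by ring
    rw [hme, _root_.coeff_mul_single]
    exact h i j _ (by omega)

private lemma actM_mul (g h : Matrix (Fin d) (Fin d) (LaurentSeries Fq))
    (L : Submodule (PowerSeries Fq) (Fin d → LaurentSeries Fq)) :
    actM Fq (g * h) L = actM Fq g (actM Fq h L) := by
  unfold actM
  rw [← Submodule.map_comp]
  congr 1
  refine LinearMap.ext fun v => ?_
  simp [Matrix.mulVecLin_mul]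

private lemma actM_one (L : Submodule (PowerSeries Fq) (Fin d → LaurentSeries Fq)) :
    actM Fq (1 : Matrix (Fin d) (Fin d) (LaurentSeries Fq)) L = L := by
  unfold actM
  rw [Matrix.mulVecLin_one]
  exact Submodule.map_id L

private lemma actM_eq_self (G G' : Matrix (Fin d) (Fin d) (LaurentSeries Fq))
    (L : Submodule (PowerSeries Fq) (Fin d → LaurentSeries Fq)) (h1 : G * G' = 1)
    (hle : actM Fq G L ≤ L) (hle' : actM Fq G' L ≤ L) : actM Fq G L = L := by
  refine le_antisymm hle ?_
  calc L = actM Fq (G * G') L := by rw [h1, actM_one]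
    _ = actM Fq G (actM Fq G' L) := actM_mul _ _ _
    _ ≤ actM Fq G L := Submodule.map_mono hle'

private lemma coeff_polyToF_pos (p : Polynomial Fq) {m : ℤ} (hm : 0 < m) :
    (polyToF Fq p).coeff m = 0 := by
  induction p using Polynomial.induction_on' with
  | add p q hp hq => rw [map_add, HahnSeries.coeff_add, hp, hq, add_zero]
  | monomial k a =>
      rw [polyToF, coe_eval₂RingHom, Polynomial.eval₂_monomial, tF, single_pow,
        C_apply, single_mul_single, zero_add]
      refine coeff_single_of_ne ?_
      simp only [nsmul_eq_mul, mul_neg, mul_one]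
      omega

private lemma glToF_mul_inv (γ : GL (Fin d) (Polynomial Fq)) :
    glToF Fq γ * glToF Fq γ⁻¹ = 1 := by
  rw [glToF, glToF, ← Matrix.map_mul, Units.mul_inv,
    Matrix.map_one _ (map_zero _) (map_one _)]

private lemma glToF_inv_mul (γ : GL (Fin d) (Polynomial Fq)) :
    glToF Fq γ⁻¹ * glToF Fq γ = 1 := by
  rw [glToF, glToF, ← Matrix.map_mul, Units.inv_mul,
    Matrix.map_one _ (map_zero _) (map_one _)]

private lemma key_le {k : ℕ} (hd : 2 ≤ d) (hk1 : 1 ≤ k) (hk2 : k ≤ d - 1)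
    (n n' : Fin d → ℤ) (hmono : ∀ i j : Fin d, i ≤ j → n j ≤ n i)
    (hn' : ∀ i : Fin d, n' i = if (i : ℕ) < d - k then n i + 1 else n i)
    (hlt : n ⟨d - k, by omega⟩ < n ⟨d - k - 1, by omega⟩)
    (G : Matrix (Fin d) (Fin d) (LaurentSeries Fq))
    (hpoly : ∀ i j : Fin d, ∀ m : ℤ, 0 < m → (G i j).coeff m = 0)
    (hle : actM Fq G (lattM Fq n) ≤ lattM Fq n) :
    actM Fq G (lattM Fq n') ≤ lattM Fq n' := by
  rw [actM_le_iff] at hle ⊢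
  intro i j m hm
  rw [hn' i, hn' j] at hm
  by_cases hi : (i : ℕ) < d - k <;> by_cases hj : (j : ℕ) < d - k <;>
    simp only [hi, hj, if_pos, if_neg, if_true, if_false] at hm
  · exact hle i j m (by omega)
  · exact hle i j m (by omega)
  · -- j < d - k ≤ i
    have h1 : n i ≤ n ⟨d - k, by omega⟩ :=
      hmono ⟨d - k, by omega⟩ i (Fin.le_def.2 (show d - k ≤ (i : ℕ) by omega))
    have h2 : n ⟨d - k - 1, by omega⟩ ≤ n j :=
      hmono j ⟨d - k - 1, by omega⟩ (Fin.le_def.2 (show (j : ℕ) ≤ d - k - 1 by omega))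
    by_cases hm0 : m ≤ 0
    · exact hle i j m (by omega)
    · exact hpoly i j m (by omega)
  · exact hle i j m (by omega)

end AuxProofs

noncomputable section SwapAux

open HahnSeries Matrix Polynomial

variable {Fq : Type} [Field Fq] {d : ℕ}

private def swapP (Fq : Type) [Field Fq] {d : ℕ} (A B : Fin d) :
    Matrix (Fin d) (Fin d) (Polynomial Fq) :=
  Matrix.of fun i j => if i = Equiv.swap A B j then 1 else 0

private lemma swapP_mul_self (A B : Fin d) : swapP Fq A B * swapP Fq A B = 1 := by
  ext i j
  rw [Matrix.mul_apply, Finset.sum_eq_single (Equiv.swap A B j)]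
  · simp [swapP, Equiv.swap_apply_self, Matrix.one_apply]
  · intro b _ hb
    simp [swapP, if_neg hb]
  · intro h; exact absurd (Finset.mem_univ _) h

private def swapGL (Fq : Type) [Field Fq] {d : ℕ} (A B : Fin d) :
    GL (Fin d) (Polynomial Fq) :=
  ⟨swapP Fq A B, swapP Fq A B, swapP_mul_self A B, swapP_mul_self A B⟩

private lemma glToF_swapGL (A B : Fin d) (i j : Fin d) :
    glToF Fq (swapGL Fq A B) i j =
      if i = Equiv.swap A B j then (1 : LaurentSeries Fq) else 0 := by
  show polyToF Fq (if i = Equiv.swap A B j then 1 else 0) = _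
  split_ifs with h
  · exact map_one _
  · exact map_zero _

private lemma glToF_swapGL_mul (A B : Fin d) :
    glToF Fq (swapGL Fq A B) * glToF Fq (swapGL Fq A B) = 1 := by
  rw [glToF, ← Matrix.map_mul]
  show (swapP Fq A B * swapP Fq A B).map _ = 1
  rw [swapP_mul_self, Matrix.map_one _ (map_zero _) (map_one _)]

private lemma swapGL_mem_stab (n : Fin d → ℤ) (A B : Fin d) (hAB : n A = n B) :
    swapGL Fq A B ∈ Stab Fq n := by
  have hnσ : ∀ x, n (Equiv.swap A B x) = n x := by
    intro x
    rw [Equiv.swap_apply_def]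
    split_ifs with h1 h2
    · rw [h1]; exact hAB.symm
    · rw [h2]; exact hAB
    · rfl
  have hle : actM Fq (glToF Fq (swapGL Fq A B)) (lattM Fq n) ≤ lattM Fq n := by
    rw [actM_le_iff]
    intro i j m hm
    rw [glToF_swapGL]
    split_ifs with h
    · subst h
      rw [hnσ j] at hm
      rw [HahnSeries.coeff_one, if_neg (by omega)]
    · exact HahnSeries.coeff_zero
  show actM Fq (glToF Fq (swapGL Fq A B)) (lattM Fq n) = lattM Fq n
  exact actM_eq_self _ _ _ (glToF_swapGL_mul A B) hle hle

end SwapAux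


open Matrix Polynomial in
/-- for `n̄ ∈ N_T^d` and `1 ≤ k ≤ d-1`, let `n̄⁽ᵏ⁾` be the normalized form of the
degree-`k` neighbor of `n̄` in `T` (add `1` to the first `d-k` coordinates).  Then
`S_n̄ ⊆ S_{n̄⁽ᵏ⁾}` (i.e. `[l_{n̄⁽ᵏ⁾}]` is a friend of `[l_n̄]`) iff `n_{d-k} > n_{d-k+1}`. -/
theorem friend_iff (Fq : Type) [Field Fq] [Fintype Fq]
    (d : ℕ) (hd : 2 ≤ d) (n : Fin d → ℤ) (hn : NT n)
    (k : ℕ) (hk1 : 1 ≤ k) (hk2 : k ≤ d - 1)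
    (n' : Fin d → ℤ)
    (hn' : ∀ i : Fin d, n' i = if (i : ℕ) < d - k then n i + 1 else n i) :
    (∀ γ ∈ Stab Fq n, γ ∈ Stab Fq n') ↔
      n ⟨d - k, by omega⟩ < n ⟨d - k - 1, by omega⟩ := by
  have hA : d - k - 1 < d := by omega
  have hB : d - k < d := by omega
  constructor
  · intro hsub
    by_contra hlt
    push_neg at hlt
    have heq : n ⟨d - k - 1, hA⟩ = n ⟨d - k, hB⟩ :=
      le_antisymm hlt (hn.1 _ _ (Fin.mk_le_mk.2 (by omega)))
    have hmem := hsub _ (swapGL_mem_stab n ⟨d - k - 1, hA⟩ ⟨d - k, hB⟩ heq)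
    have hle : actM Fq (glToF Fq (swapGL Fq ⟨d - k - 1, hA⟩ ⟨d - k, hB⟩))
        (lattM Fq n') ≤ lattM Fq n' := le_of_eq hmem
    have hbound : (0 : ℤ) < n' ⟨d - k - 1, hA⟩ - n' ⟨d - k, hB⟩ := by
      rw [hn' ⟨d - k - 1, hA⟩, hn' ⟨d - k, hB⟩,
        if_pos (show d - k - 1 < d - k by omega), if_neg (show ¬ (d - k < d - k) by omega)]
      omega
    have h0 := (actM_le_iff _ _ _).1 hle ⟨d - k, hB⟩ ⟨d - k - 1, hA⟩ 0 hbound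
    rw [glToF_swapGL, if_pos (Equiv.swap_apply_left _ _).symm, HahnSeries.coeff_one,
      if_pos rfl] at h0
    exact one_ne_zero h0
  · intro hlt γ hγ
    have hγeq : actM Fq (glToF Fq γ) (lattM Fq n) = lattM Fq n := hγ
    have hinv : actM Fq (glToF Fq γ⁻¹) (lattM Fq n) = lattM Fq n := by
      conv_lhs => rw [← hγeq]
      rw [← actM_mul, glToF_inv_mul, actM_one]
    have hpoly : ∀ (δ : GL (Fin d) (Polynomial Fq)) (i j : Fin d) (m : ℤ), 0 < m →
        ((glToF Fq δ) i j).coeff m = 0 := fun δ i j m hm => coeff_polyToF_pos _ hm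
    show actM Fq (glToF Fq γ) (lattM Fq n') = lattM Fq n'
    exact actM_eq_self _ _ _ (glToF_mul_inv γ)
      (key_le hd hk1 hk2 n n' hn.1 hn' hlt _ (hpoly γ) (le_of_eq hγeq))
      (key_le hd hk1 hk2 n n' hn.1 hn' hlt _ (hpoly γ⁻¹) (le_of_eq hinv))
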